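/- For 0 < β < 1 and N ≥ 1, the integral ∫_{ℝ^N} e^{-|v|²/2} / (1 - β e^{-|v|²/2}) dv equals (∫_{ℝ^N} e^{-|v|²/2} dv) · ∑_{n=0}^{∞} β^n / (n+1)^{N/2}. -/

import Mathlib

open MeasureTheory Real

theorem stmt_2 (N : ℕ) (hN : 1 ≤ N) (β : ℝ) (hβ0 : 0 < β) (hβ1 : β < 1) :
    ∫ v : EuclideanSpace ℝ (Fin N),
        Real.exp (-‖v‖ ^ 2 / 2) / (1 - β * Real.exp (-‖v‖ ^ 2 / 2)) =
      (∫ v : EuclideanSpace ℝ (Fin N), Real.exp (-‖v‖ ^ 2 / 2)) *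
        ∑' n : ℕ, β ^ n / ((n : ℝ) + 1) ^ ((N : ℝ) / 2) := by
  have hπ : (0:ℝ) < 2 * Real.pi := by positivity
  have hrank : ((Module.finrank ℝ (EuclideanSpace ℝ (Fin N)) : ℝ)) = (N : ℝ) := by
    simp [finrank_euclideanSpace_fin]
  -- Gaussian integral on EuclideanSpace
  have gauss : ∀ b : ℝ, 0 < b →
      ∫ v : EuclideanSpace ℝ (Fin N), Real.exp (-b * ‖v‖ ^ 2)
        = (Real.pi / b) ^ ((N : ℝ) / 2) := by
    intro b hb
    rw [GaussianFourier.integral_rexp_neg_mul_sq_norm hb]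
    norm_num [hrank]
  have hint : ∀ b : ℝ, 0 < b →
      Integrable (fun v : EuclideanSpace ℝ (Fin N) => Real.exp (-b * ‖v‖ ^ 2)) := by
    intro b hb
    have h := (GaussianFourier.integrable_cexp_neg_mul_sq_norm_add (b := (b:ℂ))
      (by simpa using hb) 0 (0 : EuclideanSpace ℝ (Fin N))).norm
    refine h.congr (Filter.Eventually.of_forall fun v => ?_)
    simp only [Complex.norm_exp]
    congr 1
    simp [← Complex.ofReal_pow]
  set F : ℕ → EuclideanSpace ℝ (Fin N) → ℝ :=
    fun n v => β ^ n * Real.exp (-(((n : ℝ) + 1) / 2) * ‖v‖ ^ 2) with hF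
  have hbpos : ∀ n : ℕ, (0:ℝ) < ((n:ℝ) + 1) / 2 := fun n => by positivity
  have hFint : ∀ n : ℕ, Integrable (F n) := fun n => (hint _ (hbpos n)).const_mul _
  have hFval : ∀ n : ℕ, ∫ v : EuclideanSpace ℝ (Fin N), F n v
      = β ^ n * (2 * Real.pi / ((n:ℝ) + 1)) ^ ((N : ℝ) / 2) := by
    intro n
    rw [hF]
    simp only
    rw [integral_const_mul, gauss _ (hbpos n)]
    congr 2
    field_simp
  -- pointwise geometric series
  have hpt : ∀ v : EuclideanSpace ℝ (Fin N),
      Real.exp (-‖v‖ ^ 2 / 2) / (1 - β * Real.exp (-‖v‖ ^ 2 / 2)) = ∑' n : ℕ, F n v := by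
    intro v
    set x := Real.exp (-‖v‖ ^ 2 / 2) with hx
    have hx0 : 0 < x := Real.exp_pos _
    have hx1 : x ≤ 1 := by
      rw [hx]
      apply Real.exp_le_one_iff.mpr
      nlinarith [sq_nonneg (‖v‖)]
    have hbx : β * x < 1 := by nlinarith
    have hbx0 : 0 ≤ β * x := by positivity
    have hgeo : ∑' n : ℕ, (β * x) ^ n = (1 - β * x)⁻¹ :=
      tsum_geometric_of_lt_one hbx0 hbx
    have hFv : ∀ n : ℕ, F n v = x * (β * x) ^ n := by
      intro n
      have hxn : x * x ^ n = Real.exp (-(((n : ℝ) + 1) / 2) * ‖v‖ ^ 2) := by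
        rw [hx, ← Real.exp_nat_mul, ← Real.exp_add]
        congr 1
        ring
      rw [hF]
      simp only
      rw [mul_pow, ← hxn]
      ring
    calc x / (1 - β * x) = x * (1 - β * x)⁻¹ := div_eq_mul_inv _ _
      _ = x * ∑' n : ℕ, (β * x) ^ n := by rw [hgeo]
      _ = ∑' n : ℕ, x * (β * x) ^ n := by rw [tsum_mul_left]
      _ = ∑' n : ℕ, F n v := by exact (tsum_congr fun n => (hFv n).symm)
  -- summability of integrals of norms
  have hFnonneg : ∀ n v, 0 ≤ F n v := fun n v => by
    rw [hF]; positivity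
  have hnorm : ∀ n : ℕ, (∫ v : EuclideanSpace ℝ (Fin N), ‖F n v‖)
      = β ^ n * (2 * Real.pi / ((n:ℝ) + 1)) ^ ((N : ℝ) / 2) := by
    intro n
    rw [← hFval n]
    congr 1
    funext v
    exact Real.norm_of_nonneg (hFnonneg n v)
  have hsum : Summable fun n : ℕ => ∫ v : EuclideanSpace ℝ (Fin N), ‖F n v‖ := by
    apply Summable.of_nonneg_of_le
      (fun n => by rw [hnorm n]; positivity)
      (fun n => ?_)
      (Summable.mul_right ((2 * Real.pi) ^ ((N:ℝ)/2))
        (summable_geometric_of_lt_one hβ0.le hβ1))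
    rw [hnorm n]
    apply mul_le_mul_of_nonneg_left _ (by positivity)
    apply Real.rpow_le_rpow (by positivity) _ (by positivity)
    rw [div_le_iff₀ (by positivity)]
    nlinarith
  have key := integral_tsum_of_summable_integral_norm hFint hsum
  have hlhs : ∫ v : EuclideanSpace ℝ (Fin N),
        Real.exp (-‖v‖ ^ 2 / 2) / (1 - β * Real.exp (-‖v‖ ^ 2 / 2))
      = ∑' n : ℕ, ∫ v : EuclideanSpace ℝ (Fin N), F n v := by
    rw [key]
    exact integral_congr_ae (Filter.Eventually.of_forall hpt)
  rw [hlhs]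
  have hRHS1 : ∫ v : EuclideanSpace ℝ (Fin N), Real.exp (-‖v‖ ^ 2 / 2)
      = (2 * Real.pi) ^ ((N : ℝ) / 2) := by
    have h1 : ∫ v : EuclideanSpace ℝ (Fin N), Real.exp (-‖v‖ ^ 2 / 2)
        = ∫ v : EuclideanSpace ℝ (Fin N), Real.exp (-(1/2 : ℝ) * ‖v‖ ^ 2) := by
      congr 1
      funext v
      congr 1
      ring
    rw [h1, gauss _ (by norm_num)]
    congr 1
    ring
  rw [hRHS1]
  rw [← tsum_mul_left]
  apply tsum_congr
  intro n
  rw [hFval n, Real.div_rpow hπ.le (by positivity)]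
  ring
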